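/- Let a_n = C_{n-1} * E[R_n] where E[R_n] is the average over all C_{n-1} ordered binary trees with n leaves of the root configuration count c_r. Then a_1 = 0 and for n ≥ 2, a_n = sum_{j=1}^{n-1} [a_j a_{n-j} + a_j C_{n-1-j} + C_{j-1} a_{n-j} + C_{j-1} C_{n-1-j}]. Equivalently, defining R(z) = sum_{n≥1} a_n z^n and C(z) the Catalan generating function, R(z) = R(z)^2 + 2 z C(z) R(z) + z^2 C(z)^2 as formal power series. -/

import Mathlib

inductive BTree where
  | leaf : BTree
  | node : BTree → BTree → BTree

def BTree.nLeaves : BTree → ℕ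
  | .leaf => 1
  | .node l r => l.nLeaves + r.nLeaves

/-- Number of root ancestral configurations. -/
def BTree.cr : BTree → ℕ
  | .leaf => 0
  | .node l r => (l.cr + 1) * (r.cr + 1)

/-- The m-th Catalan number C_m = binomial(2m, m)/(m+1). -/
def catalanNum (m : ℕ) : ℕ := (2 * m).choose m / (m + 1)

deriving instance DecidableEq for BTree


lemma catalanNum_eq_catalan (m : ℕ) : catalanNum m = catalan m := by
  rw [catalan_eq_centralBinom_div, Nat.centralBinom]; rfl

lemma BTree.one_le_nLeaves (t : BTree) : 1 ≤ t.nLeaves := by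
  induction t with
  | leaf => simp [BTree.nLeaves]
  | node l r hl hr => simp [BTree.nLeaves]; omega

def treesOf : ℕ → Finset BTree
  | 0 => ∅
  | 1 => {BTree.leaf}
  | (m+2) => (Finset.Icc 1 (m+1)).attach.biUnion fun j =>
      (treesOf j.1 ×ˢ treesOf (m+2-j.1)).image fun p => BTree.node p.1 p.2
  decreasing_by
  · have := Finset.mem_Icc.mp j.2; omega
  · have := Finset.mem_Icc.mp j.2; omega

lemma mem_treesOf (t : BTree) (n : ℕ) : t ∈ treesOf n ↔ t.nLeaves = n := by
  constructor
  · intro h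
    induction n using Nat.strong_induction_on generalizing t with
    | _ n ih =>
      match n with
      | 0 => simp [treesOf] at h
      | 1 => simp [treesOf] at h; subst h; rfl
      | (m+2) =>
        simp only [treesOf, Finset.mem_biUnion, Finset.mem_attach, true_and,
          Finset.mem_image, Finset.mem_product] at h
        obtain ⟨⟨j, hj⟩, ⟨l, r⟩, ⟨hl, hr⟩, rfl⟩ := h
        have hj' := Finset.mem_Icc.mp hj
        have h1 : l.nLeaves = j := ih j (by omega) l hl
        have h2 : r.nLeaves = m + 2 - j := ih (m+2-j) (by omega) r hr
        simp [BTree.nLeaves, h1, h2]; omega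
  · intro h
    subst h
    induction t with
    | leaf => simp [treesOf, BTree.nLeaves]
    | node l r hl hr =>
      have h1 := l.one_le_nLeaves
      have h2 := r.one_le_nLeaves
      have hn : l.nLeaves + r.nLeaves = (l.nLeaves + r.nLeaves - 2) + 2 := by omega
      show BTree.node l r ∈ treesOf ((BTree.node l r).nLeaves)
      rw [show (BTree.node l r).nLeaves = (l.nLeaves + r.nLeaves - 2) + 2 from by
        simp [BTree.nLeaves]; omega]
      simp only [treesOf, Finset.mem_biUnion, Finset.mem_attach, true_and,
        Finset.mem_image, Finset.mem_product]
      refine ⟨⟨l.nLeaves, Finset.mem_Icc.mpr (by omega)⟩, ⟨l, r⟩, ⟨hl, ?_⟩, rfl⟩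
      rw [show l.nLeaves + r.nLeaves - 2 + 2 - l.nLeaves = r.nLeaves from by omega]
      exact hr

lemma sum_treesOf (m : ℕ) (f : BTree → ℕ) :
    ∑ t ∈ treesOf (m+2), f t =
      ∑ j ∈ Finset.Icc 1 (m+1), ∑ l ∈ treesOf j, ∑ r ∈ treesOf (m+2-j), f (BTree.node l r) := by
  conv_lhs => rw [treesOf]
  rw [Finset.sum_biUnion]
  · rw [← Finset.sum_attach (Finset.Icc 1 (m+1)) (fun j => ∑ l ∈ treesOf j, ∑ r ∈ treesOf (m+2-j), f (BTree.node l r))]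
    refine Finset.sum_congr rfl fun j _ => ?_
    rw [Finset.sum_image, Finset.sum_product]
    rintro ⟨l, r⟩ h ⟨l', r'⟩ h' he
    simpa using he
  · rintro ⟨j, hj⟩ - ⟨j', hj'⟩ - hne
    simp only [Function.onFun, Finset.disjoint_left]
    rintro t ht ht'
    simp only [Finset.mem_image, Finset.mem_product] at ht ht'
    obtain ⟨⟨l, r⟩, ⟨hl, hr⟩, rfl⟩ := ht
    obtain ⟨⟨l', r'⟩, ⟨hl', hr'⟩, he⟩ := ht'
    cases he
    have e1 := (mem_treesOf _ _).mp hl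
    have e2 := (mem_treesOf _ _).mp hl'
    exact hne (by simp [Subtype.ext_iff]; omega)

lemma card_treesOf (n : ℕ) : (treesOf (n+1)).card = catalan n := by
  induction n using Nat.strong_induction_on with
  | _ n ih =>
    match n with
    | 0 => simp [treesOf]
    | (m+1) =>
      have : (treesOf (m+2)).card = ∑ t ∈ treesOf (m+2), (1:ℕ) := by simp
      rw [this, sum_treesOf, catalan_succ',
        Finset.Nat.sum_antidiagonal_eq_sum_range_succ (fun x y => catalan x * catalan y) m,
        show Finset.Icc 1 (m+1) = Finset.image (fun i => i + 1) (Finset.range (m+1)) from by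
          ext x
          simp only [Finset.mem_Icc, Finset.mem_image, Finset.mem_range]
          exact ⟨fun h => ⟨x-1, by omega, by omega⟩, by rintro ⟨i, hi, rfl⟩; omega⟩,
        Finset.sum_image (s := Finset.range (m+1)) (g := fun i => i + 1) (by intro x _ y _ h; simpa using h)]
      refine Finset.sum_congr rfl fun i hi => ?_
      have hi' := Finset.mem_range.mp hi
      have e1 : (treesOf (i+1)).card = catalan i := ih i (by omega)
      have e2 : (treesOf (m+1-i)).card = catalan (m-i) := by
        rw [show m+1-i = (m-i)+1 from by omega]; exact ih (m-i) (by omega)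
      simp [e1, e2, Finset.sum_const, mul_comm]

/-- a_n = C_{n-1} E[R_n]: the sum of the root configuration counts over all
ordered binary trees with n leaves. -/
noncomputable def a (n : ℕ) : ℕ := ∑ᶠ t : {t : BTree // t.nLeaves = n}, (t : BTree).cr

/-- Generating function R(z) = ∑ a_n z^n. -/
noncomputable def Rser : PowerSeries ℕ := PowerSeries.mk a

/-- Catalan generating function C(z). -/
noncomputable def Cser : PowerSeries ℕ := PowerSeries.mk catalanNum


lemma a_eq (n : ℕ) : a n = ∑ t ∈ treesOf n, t.cr := by
  have hset : {t : BTree | t.nLeaves = n} = ↑(treesOf n) := by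
    ext t; simp [mem_treesOf]
  rw [a, finsum_subtype_eq_finsum_cond]
  have : ∑ᶠ (i : BTree) (_ : i.nLeaves = n), i.cr = ∑ᶠ i ∈ {t : BTree | t.nLeaves = n}, i.cr := rfl
  rw [this, hset, finsum_mem_coe_finset]

lemma a_zero : a 0 = 0 := by rw [a_eq]; simp [treesOf]
lemma a_one : a 1 = 0 := by rw [a_eq]; simp [treesOf, BTree.cr]

lemma a_rec (n : ℕ) (hn : 2 ≤ n) : a n =
    ∑ j ∈ Finset.Icc 1 (n - 1),
      (a j * a (n - j) + a j * catalanNum (n - 1 - j) +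
        catalanNum (j - 1) * a (n - j) + catalanNum (j - 1) * catalanNum (n - 1 - j)) := by
  obtain ⟨m, rfl⟩ : ∃ m, n = m + 2 := ⟨n - 2, by omega⟩
  rw [a_eq, sum_treesOf]
  refine Finset.sum_congr (by norm_num) fun j hj => ?_
  have hj' := Finset.mem_Icc.mp hj
  have e1 : m + 2 - j = (m + 2) - j := rfl
  have cj : (treesOf j).card = catalanNum (j-1) := by
    have := card_treesOf (j-1)
    rw [show (j-1)+1 = j from by omega] at this
    rw [this, catalanNum_eq_catalan]
  have cnj : (treesOf (m+2-j)).card = catalanNum (m+2-1-j) := by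
    have := card_treesOf (m+2-1-j)
    rw [show (m+2-1-j)+1 = m+2-j from by omega] at this
    rw [this, catalanNum_eq_catalan]
  calc ∑ l ∈ treesOf j, ∑ r ∈ treesOf (m+2-j), (BTree.node l r).cr
      = ∑ l ∈ treesOf j, ∑ r ∈ treesOf (m+2-j), (l.cr * r.cr + l.cr + r.cr + 1) := by
        refine Finset.sum_congr rfl fun l _ => Finset.sum_congr rfl fun r _ => ?_
        show (l.cr + 1) * (r.cr + 1) = _; ring
    _ = a j * a (m+2-j) + a j * (treesOf (m+2-j)).card
        + (treesOf j).card * a (m+2-j) + (treesOf j).card * (treesOf (m+2-j)).card := by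
        simp only [Finset.sum_add_distrib, Finset.sum_const, smul_eq_mul,
          ← Finset.sum_mul, ← Finset.mul_sum, a_eq]
        ring
    _ = _ := by rw [cj, cnj]

open PowerSeries in
lemma coeff_S (k : ℕ) : (PowerSeries.coeff k) (Rser + X * Cser) =
    if k = 0 then 0 else a k + catalanNum (k-1) := by
  cases k with
  | zero => simp [Rser, Cser, a_zero]
  | succ k => simp [Rser, Cser, PowerSeries.coeff_succ_X_mul]

open PowerSeries in
lemma gf : Rser = Rser ^ 2 + 2 * X * Cser * Rser + X ^ 2 * Cser ^ 2 := by
  have key : ∀ n, a n = ∑ j ∈ Finset.Icc 1 (n - 1),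
      (a j * a (n - j) + a j * catalanNum (n - 1 - j) +
        catalanNum (j - 1) * a (n - j) + catalanNum (j - 1) * catalanNum (n - 1 - j)) := by
    intro n
    match n with
    | 0 => simpa using a_zero
    | 1 => simpa using a_one
    | (m+2) => exact a_rec (m+2) (by omega)
  have hring : Rser ^ 2 + 2 * X * Cser * Rser + X ^ 2 * Cser ^ 2
      = (Rser + X * Cser) * (Rser + X * Cser) := by ring
  rw [hring]
  ext n
  rw [PowerSeries.coeff_mul, Finset.Nat.sum_antidiagonal_eq_sum_range_succ_mk,
    show (PowerSeries.coeff n) Rser = a n from PowerSeries.coeff_mk n a, key n]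
  simp only [coeff_S]
  calc ∑ j ∈ Finset.Icc 1 (n-1),
        (a j * a (n - j) + a j * catalanNum (n - 1 - j) +
          catalanNum (j - 1) * a (n - j) + catalanNum (j - 1) * catalanNum (n - 1 - j))
      = ∑ j ∈ Finset.Icc 1 (n-1),
          ((if j = 0 then 0 else a j + catalanNum (j-1)) *
            (if n - j = 0 then 0 else a (n-j) + catalanNum (n-j-1))) := by
        refine Finset.sum_congr rfl fun j hj => ?_
        have hj' := Finset.mem_Icc.mp hj
        rw [if_neg (by omega), if_neg (by omega), show n - j - 1 = n - 1 - j from by omega]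
        ring
    _ = ∑ j ∈ Finset.range (n+1),
          ((if j = 0 then 0 else a j + catalanNum (j-1)) *
            (if n - j = 0 then 0 else a (n-j) + catalanNum (n-j-1))) := by
        refine Finset.sum_subset (fun j hj => ?_) (fun j hj hj' => ?_)
        · simp only [Finset.mem_Icc] at hj; simp only [Finset.mem_range]; omega
        · simp only [Finset.mem_range] at hj
          simp only [Finset.mem_Icc, not_and, not_le] at hj'
          rcases eq_or_ne j 0 with rfl | h0
          · rw [if_pos rfl, zero_mul]
          · rw [show n - j = 0 from by omega, if_pos rfl, mul_zero]

open PowerSeries in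
theorem root_config_recurrence :
    a 1 = 0 ∧
    (∀ n : ℕ, 2 ≤ n → a n =
      ∑ j ∈ Finset.Icc 1 (n - 1),
        (a j * a (n - j) + a j * catalanNum (n - 1 - j) +
          catalanNum (j - 1) * a (n - j) + catalanNum (j - 1) * catalanNum (n - 1 - j))) ∧
    Rser = Rser ^ 2 + 2 * X * Cser * Rser + X ^ 2 * Cser ^ 2 :=
  ⟨a_one, a_rec, gf⟩
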